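/- Let θ_0 ∈ ℝ^p. For each n, on a probability space (Ω_n, Pr_n), let M_n : ℝ^p × Ω_n → ℝ be a random function, Δ_n : Ω_n → ℝ^p random vectors, and J_n symmetric p×p matrices. Let θ̃_n be any random sequence with θ̃_n → θ_0 in Pr_n-probability, and write h̃_n = θ̃_n − θ_0. Suppose there exist random functions G_n, H_n : ℝ^p × Ω_n → ℝ, twice continuously differentiable in the first argument (and possibly depending on θ̃_n), such that: (i) sandwich: n(G_n(θ̃_n) − G_n(θ_0)) ≤ M_n(θ̃_n) − M_n(θ_0) ≤ n(H_n(θ̃_n) − H_n(θ_0)); (ii) for F ∈ {G_n, H_n}: (√n ∇_θ F(θ_0) − Δ_n)/(√n‖h̃_n‖ + 1) → 0 in Pr_n-probability; and (iii) for F ∈ {G_n, H_n} and every random sequence s_n with s_n → θ_0 in Pr_n-probability, ∇²_θ F(s_n) + J_n → 0 in Pr_n-probability. Then M_n(θ̃_n) − M_n(θ_0) = √n h̃_nᵀ Δ_n − ½ n h̃_nᵀ J_n h̃_n + R_n, where R_n/(√n‖h̃_n‖ + 1)² → 0 in Pr_n-probability. -/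

import Mathlib

open MeasureTheory Filter Topology RealInnerProductSpace

open Set

section Aux


lemma scalar_taylor2 (φ : ℝ → ℝ) (hφ : ContDiff ℝ 2 φ) :
    ∃ t ∈ Ioo (0:ℝ) 1, φ 1 - φ 0 = deriv φ 0 + (1/2) * deriv (deriv φ) t := by
  have hφ1 : Differentiable ℝ φ := hφ.differentiable (by norm_num)
  have hφ' : Differentiable ℝ (deriv φ) := (hφ.iterate_deriv' 1 1).differentiable (by norm_num)
  set C : ℝ := φ 1 - φ 0 - deriv φ 0 with hC
  set ψ : ℝ → ℝ := fun t => φ t - φ 0 - t * deriv φ 0 - t ^ 2 * C with hψ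
  have hψd : ∀ t, HasDerivAt ψ (deriv φ t - deriv φ 0 - 2 * t * C) t := by
    intro t
    have h1 : HasDerivAt φ (deriv φ t) t := (hφ1 t).hasDerivAt
    have h2 : HasDerivAt (fun t : ℝ => t * deriv φ 0) (deriv φ 0) t := by
      simpa using (hasDerivAt_id t).mul_const (deriv φ 0)
    have h3 : HasDerivAt (fun t : ℝ => t ^ 2 * C) (2 * t * C) t := by
      simpa using (hasDerivAt_pow 2 t).mul_const C
    exact ((h1.sub_const (φ 0)).sub h2).sub h3
  have hψ0 : ψ 0 = 0 := by simp [hψ]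
  have hψ1 : ψ 1 = 0 := by simp [hψ, hC]
  obtain ⟨t1, ht1, ht1z⟩ := exists_deriv_eq_zero (f := ψ) (by norm_num : (0:ℝ) < 1)
    (Continuous.continuousOn (by fun_prop)) (by rw [hψ0, hψ1])
  have hder : deriv ψ t1 = deriv φ t1 - deriv φ 0 - 2 * t1 * C := (hψd t1).deriv
  have key1 : deriv φ t1 - deriv φ 0 = 2 * t1 * C := by
    have := ht1z; rw [hder] at this; linarith
  obtain ⟨t2, ht2, ht2s⟩ := exists_deriv_eq_slope (deriv φ) ht1.1
    (Continuous.continuousOn ((hφ.iterate_deriv' 1 1).continuous))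
    (hφ'.differentiableOn)
  refine ⟨t2, ⟨ht2.1, ht2.2.trans ht1.2⟩, ?_⟩
  have : deriv (deriv φ) t2 = 2 * C := by
    have ht1ne : t1 ≠ 0 := ne_of_gt ht1.1
    rw [ht2s, key1]; field_simp; ring
  rw [this, hC]; ring


variable {E : Type*} [NormedAddCommGroup E] [InnerProductSpace ℝ E] [CompleteSpace E]

lemma grad_contDiff {f : E → ℝ} (hf : ContDiff ℝ 2 f) : ContDiff ℝ 1 (gradient f) := by
  have h1 : ContDiff ℝ 1 (fderiv ℝ f) := hf.fderiv_right (by norm_num)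
  have : gradient f = fun x => (InnerProductSpace.toDual ℝ E).symm (fderiv ℝ f x) := rfl
  rw [this]
  exact (InnerProductSpace.toDual ℝ E).symm.contDiff.comp h1

lemma line_deriv {f : E → ℝ} (hf : ContDiff ℝ 2 f) (x h : E) (t : ℝ) :
    HasDerivAt (fun t : ℝ => f (x + t • h)) ⟪gradient f (x + t • h), h⟫ t := by
  have hline : HasDerivAt (fun t : ℝ => x + t • h) h t := by
    simpa using ((hasDerivAt_id t).smul_const h).const_add x
  have hfd : HasFDerivAt f (fderiv ℝ f (x + t • h)) (x + t • h) :=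
    (hf.differentiable (by norm_num) _).hasFDerivAt
  have := hfd.comp_hasDerivAt t hline
  have heq : ⟪gradient f (x + t • h), h⟫ = fderiv ℝ f (x + t • h) h :=
    InnerProductSpace.toDual_symm_apply
  rw [heq]; exact this

lemma line_deriv2 {f : E → ℝ} (hf : ContDiff ℝ 2 f) (x h : E) (t : ℝ) :
    HasDerivAt (fun t : ℝ => ⟪gradient f (x + t • h), h⟫)
      ⟪(fderiv ℝ (gradient f) (x + t • h)) h, h⟫ t := by
  have hline : HasDerivAt (fun t : ℝ => x + t • h) h t := by
    simpa using ((hasDerivAt_id t).smul_const h).const_add x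
  have hg : HasFDerivAt (gradient f) (fderiv ℝ (gradient f) (x + t • h)) (x + t • h) :=
    ((grad_contDiff hf).differentiable (by norm_num) _).hasFDerivAt
  have h1 : HasDerivAt (fun t : ℝ => gradient f (x + t • h))
      ((fderiv ℝ (gradient f) (x + t • h)) h) t := by
    have := hg.comp_hasDerivAt t hline; exact this
  simpa using HasDerivAt.inner ℝ h1 (hasDerivAt_const t h)

lemma taylor2 {f : E → ℝ} (hf : ContDiff ℝ 2 f) (x h : E) :
    ∃ t ∈ Icc (0:ℝ) 1, f (x + h) - f x =
      ⟪gradient f x, h⟫ + (1/2) * ⟪(fderiv ℝ (gradient f) (x + t • h)) h, h⟫ := by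
  set φ : ℝ → ℝ := fun t => f (x + t • h) with hφdef
  have hφ : ContDiff ℝ 2 φ :=
    hf.comp (contDiff_const.add (contDiff_id.smul contDiff_const))
  obtain ⟨t, ht, heq⟩ := scalar_taylor2 φ hφ
  have hd1 : deriv φ = fun t => ⟪gradient f (x + t • h), h⟫ :=
    funext fun t => (line_deriv hf x h t).deriv
  have hd2 : deriv (deriv φ) t = ⟪(fderiv ℝ (gradient f) (x + t • h)) h, h⟫ := by
    rw [hd1]; exact (line_deriv2 hf x h t).deriv
  refine ⟨t, ⟨le_of_lt ht.1, le_of_lt ht.2⟩, ?_⟩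
  have h0 : φ 0 = f x := by simp [hφdef]
  have h1 : φ 1 = f (x + h) := by simp [hφdef]
  have hd0 : deriv φ 0 = ⟪gradient f x, h⟫ := by rw [hd1]; simp
  rw [← h0, ← h1, ← hd0, ← hd2]
  exact heq

lemma key (f : E → ℝ) (hf : ContDiff ℝ 2 f) (θ0 θ1 Δ : E) (J : E →L[ℝ] E)
    (c : ℝ) (hc : 0 ≤ c) :
    ∃ s : E, ‖s - θ0‖ ≤ ‖θ1 - θ0‖ ∧
      |c^2 * (f θ1 - f θ0) -
        (c * ⟪θ1 - θ0, Δ⟫ - (1/2) * c^2 * ⟪θ1 - θ0, J (θ1 - θ0)⟫)|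
      ≤ (c * ‖θ1 - θ0‖) * ‖c • gradient f θ0 - Δ‖
        + (1/2) * (c * ‖θ1 - θ0‖)^2 * ‖fderiv ℝ (gradient f) s + J‖ := by
  set h : E := θ1 - θ0 with hh
  obtain ⟨t, ht, htay⟩ := taylor2 hf θ0 h
  refine ⟨θ0 + t • h, ?_, ?_⟩
  · rw [add_sub_cancel_left, norm_smul, Real.norm_eq_abs,
      abs_of_nonneg ht.1]
    exact mul_le_of_le_one_left (norm_nonneg h) ht.2
  · have hθ1 : θ0 + h = θ1 := by rw [hh]; abel
    rw [hθ1] at htay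
    set g0 : E := gradient f θ0
    set T : E →L[ℝ] E := fderiv ℝ (gradient f) (θ0 + t • h)
    have e1 : c * ⟪h, c • g0 - Δ⟫ = c^2 * ⟪g0, h⟫ - c * ⟪h, Δ⟫ := by
      rw [inner_sub_right, real_inner_smul_right, real_inner_comm h g0]; ring
    have e2 : ⟪(T + J) h, h⟫ = ⟪T h, h⟫ + ⟪h, J h⟫ := by
      rw [ContinuousLinearMap.add_apply, inner_add_left, real_inner_comm (J h) h]
    have emain : c^2 * (f θ1 - f θ0) -
        (c * ⟪h, Δ⟫ - (1/2) * c^2 * ⟪h, J h⟫)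
        = c * ⟪h, c • g0 - Δ⟫ + (1/2) * c^2 * ⟪(T + J) h, h⟫ := by
      rw [htay, e1, e2]; ring
    rw [emain]
    have b1 : |c * ⟪h, c • g0 - Δ⟫| ≤ c * ‖h‖ * ‖c • g0 - Δ‖ := by
      rw [abs_mul, abs_of_nonneg hc, mul_assoc]
      exact mul_le_mul_of_nonneg_left (abs_real_inner_le_norm _ _) hc
    have b2 : |⟪(T + J) h, h⟫| ≤ ‖T + J‖ * ‖h‖^2 := by
      calc |⟪(T + J) h, h⟫| ≤ ‖(T + J) h‖ * ‖h‖ := by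
            simpa [real_inner_comm] using abs_real_inner_le_norm ((T + J) h) h
        _ ≤ (‖T + J‖ * ‖h‖) * ‖h‖ := by
            gcongr; exact (T + J).le_opNorm h
        _ = ‖T + J‖ * ‖h‖^2 := by ring
    calc |c * ⟪h, c • g0 - Δ⟫ + (1/2) * c^2 * ⟪(T + J) h, h⟫|
        ≤ |c * ⟪h, c • g0 - Δ⟫| + |(1/2) * c^2 * ⟪(T + J) h, h⟫| := abs_add_le _ _
      _ ≤ c * ‖h‖ * ‖c • g0 - Δ‖ + (1/2) * c^2 * (‖T + J‖ * ‖h‖^2) := by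
          refine add_le_add b1 ?_
          rw [abs_mul, abs_mul]
          have : |(1:ℝ)/2| = 1/2 := by norm_num
          rw [this, abs_pow, sq_abs]
          nlinarith [b2, sq_nonneg c, abs_nonneg (⟪(T + J) h, h⟫ : ℝ)]
      _ = (c * ‖h‖) * ‖c • g0 - Δ‖ + (1/2) * (c * ‖h‖)^2 * ‖T + J‖ := by ring

lemma final_bound (R AG AH nvG nvH nWG nWH b ε : ℝ)
    (hb : 0 ≤ b) (hvG0 : 0 ≤ nvG) (hvH0 : 0 ≤ nvH) (hWG0 : 0 ≤ nWG) (hWH0 : 0 ≤ nWH)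
    (h1 : AG ≤ R) (h2 : R ≤ AH)
    (hAG : |AG| ≤ b * nvG + (1/2) * b^2 * nWG)
    (hAH : |AH| ≤ b * nvH + (1/2) * b^2 * nWH)
    (hvG : nvG / (b+1) ≤ ε/4) (hvH : nvH / (b+1) ≤ ε/4)
    (hWG : nWG ≤ ε/2) (hWH : nWH ≤ ε/2) :
    |R / (b+1)^2| ≤ ε := by
  have ha : (0:ℝ) < b + 1 := by linarith
  have hvG' : nvG ≤ ε/4 * (b+1) := by
    rw [div_le_iff₀ ha] at hvG; linarith
  have hvH' : nvH ≤ ε/4 * (b+1) := by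
    rw [div_le_iff₀ ha] at hvH; linarith
  have hR : |R| ≤ |AG| + |AH| := by
    rw [abs_le]
    constructor
    · have := neg_abs_le AG
      have := abs_nonneg AH
      linarith
    · have := le_abs_self AH
      have := abs_nonneg AG
      linarith
  rw [abs_div, abs_of_nonneg (by positivity : (0:ℝ) ≤ (b+1)^2),
    div_le_iff₀ (by positivity)]
  have eG : b * nvG ≤ ε/4 * (b+1)^2 := by nlinarith
  have eH : b * nvH ≤ ε/4 * (b+1)^2 := by nlinarith
  have eWG : (1/2) * b^2 * nWG ≤ ε/4 * (b+1)^2 := by nlinarith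
  have eWH : (1/2) * b^2 * nWH ≤ ε/4 * (b+1)^2 := by nlinarith
  linarith
end Aux


/-- Sandwich argument along a random sequence `θ̃ₙ → θ₀`: the criterion
difference `Mₙ(θ̃ₙ) − Mₙ(θ₀)` admits the quadratic expansion
`√n h̃ₙᵀΔₙ − ½ n h̃ₙᵀJₙh̃ₙ + Rₙ` with `Rₙ/(√n‖h̃ₙ‖ + 1)² → 0` in probability. -/
theorem stmt_14
    (d : ℕ) (θ0 : EuclideanSpace ℝ (Fin d))
    (Ω : ℕ → Type*) [∀ n, MeasurableSpace (Ω n)]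
    (Pr : (n : ℕ) → Measure (Ω n)) (hPr : ∀ n, IsProbabilityMeasure (Pr n))
    (M : (n : ℕ) → EuclideanSpace ℝ (Fin d) → Ω n → ℝ)
    (Δ : (n : ℕ) → Ω n → EuclideanSpace ℝ (Fin d))
    (Jn : ℕ → Matrix (Fin d) (Fin d) ℝ) (hJnsym : ∀ n, (Jn n).IsSymm)
    -- the random sequence θ̃ₙ → θ₀ in probability
    (θtil : (n : ℕ) → Ω n → EuclideanSpace ℝ (Fin d))
    (hθtil : ∀ ε > (0 : ℝ),
      Tendsto (fun n => Pr n {ω | ε < ‖θtil n ω - θ0‖}) atTop (𝓝 0))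
    -- smooth random functions Gₙ, Hₙ
    (G H : (n : ℕ) → EuclideanSpace ℝ (Fin d) → Ω n → ℝ)
    (hGdiff : ∀ n ω, ContDiff ℝ 2 fun θ => G n θ ω)
    (hHdiff : ∀ n ω, ContDiff ℝ 2 fun θ => H n θ ω)
    -- (i) sandwich
    (hsand : ∀ (n : ℕ) (ω : Ω n),
      (n : ℝ) * (G n (θtil n ω) ω - G n θ0 ω) ≤ M n (θtil n ω) ω - M n θ0 ω ∧
      M n (θtil n ω) ω - M n θ0 ω ≤ (n : ℝ) * (H n (θtil n ω) ω - H n θ0 ω))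
    -- (ii) (√n ∇F(θ₀) − Δₙ)/(√n‖h̃ₙ‖ + 1) → 0 in probability, F ∈ {Gₙ, Hₙ}
    (hgradG : ∀ ε > (0 : ℝ),
      Tendsto (fun n => Pr n {ω | ε <
          ‖(Real.sqrt n * ‖θtil n ω - θ0‖ + 1)⁻¹ •
            (Real.sqrt n • gradient (fun θ => G n θ ω) θ0 - Δ n ω)‖})
        atTop (𝓝 0))
    (hgradH : ∀ ε > (0 : ℝ),
      Tendsto (fun n => Pr n {ω | ε <
          ‖(Real.sqrt n * ‖θtil n ω - θ0‖ + 1)⁻¹ •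
            (Real.sqrt n • gradient (fun θ => H n θ ω) θ0 - Δ n ω)‖})
        atTop (𝓝 0))
    -- (iii) ∇²F(sₙ) + Jₙ → 0 in probability for every random sₙ → θ₀, F ∈ {Gₙ, Hₙ}
    (hhessG : ∀ s : (n : ℕ) → Ω n → EuclideanSpace ℝ (Fin d),
      (∀ ε > (0 : ℝ),
        Tendsto (fun n => Pr n {ω | ε < ‖s n ω - θ0‖}) atTop (𝓝 0)) →
      ∀ ε > (0 : ℝ),
        Tendsto (fun n => Pr n {ω | ε <
            ‖fderiv ℝ (gradient fun θ => G n θ ω) (s n ω) +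
              Matrix.toEuclideanCLM (𝕜 := ℝ) (Jn n)‖})
          atTop (𝓝 0))
    (hhessH : ∀ s : (n : ℕ) → Ω n → EuclideanSpace ℝ (Fin d),
      (∀ ε > (0 : ℝ),
        Tendsto (fun n => Pr n {ω | ε < ‖s n ω - θ0‖}) atTop (𝓝 0)) →
      ∀ ε > (0 : ℝ),
        Tendsto (fun n => Pr n {ω | ε <
            ‖fderiv ℝ (gradient fun θ => H n θ ω) (s n ω) +
              Matrix.toEuclideanCLM (𝕜 := ℝ) (Jn n)‖})
          atTop (𝓝 0)) :
    -- conclusion: Rₙ := Mₙ(θ̃ₙ) − Mₙ(θ₀) − (√n h̃ₙᵀΔₙ − ½ n h̃ₙᵀJₙh̃ₙ) satisfies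
    -- Rₙ/(√n‖h̃ₙ‖ + 1)² → 0 in probability
    ∀ ε > (0 : ℝ),
      Tendsto (fun n => Pr n {ω | ε <
          |(M n (θtil n ω) ω - M n θ0 ω -
            (Real.sqrt n * ⟪θtil n ω - θ0, Δ n ω⟫ -
              (1 / 2) * (n : ℝ) *
                ⟪θtil n ω - θ0,
                  (Matrix.toEuclideanCLM (𝕜 := ℝ) (Jn n)) (θtil n ω - θ0)⟫)) /
            (Real.sqrt n * ‖θtil n ω - θ0‖ + 1) ^ 2|})
        atTop (𝓝 0) := by
  intro ε hε
  classical
  have hc2 : ∀ n : ℕ, (Real.sqrt n)^2 = (n:ℝ) := fun n => Real.sq_sqrt (Nat.cast_nonneg n)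
  have keyG : ∀ (n : ℕ) (ω : Ω n), ∃ s : EuclideanSpace ℝ (Fin d),
      ‖s - θ0‖ ≤ ‖θtil n ω - θ0‖ ∧
      |(n:ℝ) * (G n (θtil n ω) ω - G n θ0 ω) -
        (Real.sqrt n * ⟪θtil n ω - θ0, Δ n ω⟫ -
          (1/2) * (n:ℝ) *
            ⟪θtil n ω - θ0, (Matrix.toEuclideanCLM (𝕜 := ℝ) (Jn n)) (θtil n ω - θ0)⟫)|
      ≤ (Real.sqrt n * ‖θtil n ω - θ0‖) *
          ‖Real.sqrt n • gradient (fun θ => G n θ ω) θ0 - Δ n ω‖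
        + (1/2) * (Real.sqrt n * ‖θtil n ω - θ0‖)^2 *
          ‖fderiv ℝ (gradient fun θ => G n θ ω) s +
            Matrix.toEuclideanCLM (𝕜 := ℝ) (Jn n)‖ := by
    intro n ω
    have h := key (fun θ => G n θ ω) (hGdiff n ω) θ0 (θtil n ω) (Δ n ω)
      (Matrix.toEuclideanCLM (𝕜 := ℝ) (Jn n)) (Real.sqrt n) (Real.sqrt_nonneg n)
    rw [hc2 n] at h
    exact h
  have keyH : ∀ (n : ℕ) (ω : Ω n), ∃ s : EuclideanSpace ℝ (Fin d),
      ‖s - θ0‖ ≤ ‖θtil n ω - θ0‖ ∧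
      |(n:ℝ) * (H n (θtil n ω) ω - H n θ0 ω) -
        (Real.sqrt n * ⟪θtil n ω - θ0, Δ n ω⟫ -
          (1/2) * (n:ℝ) *
            ⟪θtil n ω - θ0, (Matrix.toEuclideanCLM (𝕜 := ℝ) (Jn n)) (θtil n ω - θ0)⟫)|
      ≤ (Real.sqrt n * ‖θtil n ω - θ0‖) *
          ‖Real.sqrt n • gradient (fun θ => H n θ ω) θ0 - Δ n ω‖
        + (1/2) * (Real.sqrt n * ‖θtil n ω - θ0‖)^2 *
          ‖fderiv ℝ (gradient fun θ => H n θ ω) s +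
            Matrix.toEuclideanCLM (𝕜 := ℝ) (Jn n)‖ := by
    intro n ω
    have h := key (fun θ => H n θ ω) (hHdiff n ω) θ0 (θtil n ω) (Δ n ω)
      (Matrix.toEuclideanCLM (𝕜 := ℝ) (Jn n)) (Real.sqrt n) (Real.sqrt_nonneg n)
    rw [hc2 n] at h
    exact h
  choose sG hsG1 hsG2 using keyG
  choose sH hsH1 hsH2 using keyH
  have hsGtend : ∀ ε' > (0:ℝ),
      Tendsto (fun n => Pr n {ω | ε' < ‖sG n ω - θ0‖}) atTop (𝓝 0) := by
    intro ε' hε'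
    refine tendsto_of_tendsto_of_tendsto_of_le_of_le tendsto_const_nhds (hθtil ε' hε')
      (fun n => zero_le) (fun n => measure_mono fun ω hω => ?_)
    exact lt_of_lt_of_le hω (hsG1 n ω)
  have hsHtend : ∀ ε' > (0:ℝ),
      Tendsto (fun n => Pr n {ω | ε' < ‖sH n ω - θ0‖}) atTop (𝓝 0) := by
    intro ε' hε'
    refine tendsto_of_tendsto_of_tendsto_of_le_of_le tendsto_const_nhds (hθtil ε' hε')
      (fun n => zero_le) (fun n => measure_mono fun ω hω => ?_)
    exact lt_of_lt_of_le hω (hsH1 n ω)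
  have hVG := hgradG (ε/4) (by positivity)
  have hVH := hgradH (ε/4) (by positivity)
  have hWG := hhessG sG hsGtend (ε/2) (by positivity)
  have hWH := hhessH sH hsHtend (ε/2) (by positivity)
  have hle : ∀ n : ℕ,
      Pr n {ω | ε <
          |(M n (θtil n ω) ω - M n θ0 ω -
            (Real.sqrt n * ⟪θtil n ω - θ0, Δ n ω⟫ -
              (1 / 2) * (n : ℝ) *
                ⟪θtil n ω - θ0,
                  (Matrix.toEuclideanCLM (𝕜 := ℝ) (Jn n)) (θtil n ω - θ0)⟫)) /
            (Real.sqrt n * ‖θtil n ω - θ0‖ + 1) ^ 2|}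
      ≤ (Pr n {ω | ε/4 <
          ‖(Real.sqrt n * ‖θtil n ω - θ0‖ + 1)⁻¹ •
            (Real.sqrt n • gradient (fun θ => G n θ ω) θ0 - Δ n ω)‖}
        + Pr n {ω | ε/4 <
          ‖(Real.sqrt n * ‖θtil n ω - θ0‖ + 1)⁻¹ •
            (Real.sqrt n • gradient (fun θ => H n θ ω) θ0 - Δ n ω)‖})
        + (Pr n {ω | ε/2 <
            ‖fderiv ℝ (gradient fun θ => G n θ ω) (sG n ω) +
              Matrix.toEuclideanCLM (𝕜 := ℝ) (Jn n)‖}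
          + Pr n {ω | ε/2 <
            ‖fderiv ℝ (gradient fun θ => H n θ ω) (sH n ω) +
              Matrix.toEuclideanCLM (𝕜 := ℝ) (Jn n)‖}) := by
    intro n
    have hsub : {ω | ε <
          |(M n (θtil n ω) ω - M n θ0 ω -
            (Real.sqrt n * ⟪θtil n ω - θ0, Δ n ω⟫ -
              (1 / 2) * (n : ℝ) *
                ⟪θtil n ω - θ0,
                  (Matrix.toEuclideanCLM (𝕜 := ℝ) (Jn n)) (θtil n ω - θ0)⟫)) /
            (Real.sqrt n * ‖θtil n ω - θ0‖ + 1) ^ 2|}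
        ⊆ (({ω | ε/4 <
          ‖(Real.sqrt n * ‖θtil n ω - θ0‖ + 1)⁻¹ •
            (Real.sqrt n • gradient (fun θ => G n θ ω) θ0 - Δ n ω)‖}
          ∪ {ω | ε/4 <
          ‖(Real.sqrt n * ‖θtil n ω - θ0‖ + 1)⁻¹ •
            (Real.sqrt n • gradient (fun θ => H n θ ω) θ0 - Δ n ω)‖})
          ∪ ({ω | ε/2 <
            ‖fderiv ℝ (gradient fun θ => G n θ ω) (sG n ω) +
              Matrix.toEuclideanCLM (𝕜 := ℝ) (Jn n)‖}
          ∪ {ω | ε/2 <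
            ‖fderiv ℝ (gradient fun θ => H n θ ω) (sH n ω) +
              Matrix.toEuclideanCLM (𝕜 := ℝ) (Jn n)‖})) := by
      intro ω hω
      simp only [Set.mem_setOf_eq] at hω
      by_contra hcon
      simp only [Set.mem_union, Set.mem_setOf_eq, not_or, not_lt] at hcon
      obtain ⟨⟨h1, h2⟩, h3, h4⟩ := hcon
      have hb : (0:ℝ) < Real.sqrt n * ‖θtil n ω - θ0‖ + 1 := by positivity
      have hnorm : ∀ v : EuclideanSpace ℝ (Fin d),
          ‖(Real.sqrt n * ‖θtil n ω - θ0‖ + 1)⁻¹ • v‖ =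
            ‖v‖ / (Real.sqrt n * ‖θtil n ω - θ0‖ + 1) := by
        intro v
        rw [norm_smul, Real.norm_eq_abs, abs_inv, abs_of_pos hb, inv_mul_eq_div]
      rw [hnorm] at h1 h2
      have hfin := final_bound
        (M n (θtil n ω) ω - M n θ0 ω -
          (Real.sqrt n * ⟪θtil n ω - θ0, Δ n ω⟫ -
            (1 / 2) * (n : ℝ) *
              ⟪θtil n ω - θ0,
                (Matrix.toEuclideanCLM (𝕜 := ℝ) (Jn n)) (θtil n ω - θ0)⟫))
        ((n:ℝ) * (G n (θtil n ω) ω - G n θ0 ω) -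
          (Real.sqrt n * ⟪θtil n ω - θ0, Δ n ω⟫ -
            (1 / 2) * (n : ℝ) *
              ⟪θtil n ω - θ0,
                (Matrix.toEuclideanCLM (𝕜 := ℝ) (Jn n)) (θtil n ω - θ0)⟫))
        ((n:ℝ) * (H n (θtil n ω) ω - H n θ0 ω) -
          (Real.sqrt n * ⟪θtil n ω - θ0, Δ n ω⟫ -
            (1 / 2) * (n : ℝ) *
              ⟪θtil n ω - θ0,
                (Matrix.toEuclideanCLM (𝕜 := ℝ) (Jn n)) (θtil n ω - θ0)⟫))
        ‖Real.sqrt n • gradient (fun θ => G n θ ω) θ0 - Δ n ω‖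
        ‖Real.sqrt n • gradient (fun θ => H n θ ω) θ0 - Δ n ω‖
        ‖fderiv ℝ (gradient fun θ => G n θ ω) (sG n ω) +
          Matrix.toEuclideanCLM (𝕜 := ℝ) (Jn n)‖
        ‖fderiv ℝ (gradient fun θ => H n θ ω) (sH n ω) +
          Matrix.toEuclideanCLM (𝕜 := ℝ) (Jn n)‖
        (Real.sqrt n * ‖θtil n ω - θ0‖) ε
        (by positivity) (norm_nonneg _) (norm_nonneg _) (norm_nonneg _) (norm_nonneg _)
        (sub_le_sub_right (hsand n ω).1 _)
        (sub_le_sub_right (hsand n ω).2 _)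
        (hsG2 n ω) (hsH2 n ω) h1 h2 h3 h4
      exact absurd hω (not_lt.mpr hfin)
    calc Pr n _ ≤ Pr n _ := measure_mono hsub
      _ ≤ _ := (measure_union_le _ _).trans
          (add_le_add (measure_union_le _ _) (measure_union_le _ _))
  have hsum := (hVG.add hVH).add (hWG.add hWH)
  simp only [add_zero] at hsum
  exact tendsto_of_tendsto_of_tendsto_of_le_of_le tendsto_const_nhds hsum
    (fun n => zero_le) hle
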